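/- arXiv:2604.10753 — 2 statements merged into one kernel-verified Lean document; each statement's English description precedes it below -/
import Mathlib

section
/- Let A be a finite ℤ₊-nearring with ℤ₊-basis {b_j}_{j ∈ J}. Then A is discrete if and only if the relation ≤_LR on its basis—defined by b_i ≤_LR b_j if and only if there exist basis elements b_k and b_l such that b_i appears with positive coefficient in the product b_k · b_j · b_l—is symmetric. -/
section aux
variable {J : Type*} [Fintype J] {A : Type*} [NonUnitalRing A] (B : Module.Basis J ℤ A)

lemma repr_expand_left (x y : A) (t : J) :
    B.repr (x * y) t = ∑ u, B.repr x u * B.repr (B u * y) t := by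
  conv_lhs => rw [← B.sum_repr x, Finset.sum_mul]
  simp [smul_mul_assoc, Finsupp.finset_sum_apply]

lemma repr_expand_right (x y : A) (t : J) :
    B.repr (x * y) t = ∑ u, B.repr y u * B.repr (x * B u) t := by
  conv_lhs => rw [← B.sum_repr y, Finset.mul_sum]
  simp [mul_smul_comm, Finsupp.finset_sum_apply]

lemma hpos3 (hpos : ∀ i j k : J, 0 ≤ B.repr (B i * B j) k) (p i q t : J) :
    0 ≤ B.repr (B p * B i * B q) t := by
  rw [repr_expand_left]
  exact Finset.sum_nonneg fun u _ => mul_nonneg (hpos p i u) (hpos u q t)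

lemma exists_pos_of_sum_pos {f : J → ℤ} (h : 0 < ∑ u, f u) : ∃ u, 0 < f u := by
  obtain ⟨u, _, hu⟩ := Finset.exists_lt_of_sum_lt (by simpa using h :
    ∑ u : J, (0 : ℤ) < ∑ u, f u)
  exact ⟨u, hu⟩

end aux


/-- Given a possibly non-unital ring `A` that is free as a `ℤ`-module with basis `B`,
the relation `≤_LR` on basis indices: `i ≤_LR j` iff `b_i` appears with positive
coefficient in some product `b_k * b_j * b_l`. -/
def leLR {J : Type*} {A : Type*} [NonUnitalRing A] (B : Module.Basis J ℤ A) (i j : J) : Prop :=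
  ∃ k l : J, 0 < B.repr (B k * B j * B l) i

/-- The `ℤ`-span of the basis elements indexed by `K` is a two-sided ideal of `A`.
Such ideals are exactly the two-sided `ℤ₊`-ideals of the `ℤ₊`-pseudoring `(A, B)`. -/
def SpansTwoSidedIdeal {J : Type*} {A : Type*} [NonUnitalRing A] (B : Module.Basis J ℤ A)
    (K : Set J) : Prop :=
  ∀ a : A, ∀ x ∈ Submodule.span ℤ (⇑B '' K),
    a * x ∈ Submodule.span ℤ (⇑B '' K) ∧ x * a ∈ Submodule.span ℤ (⇑B '' K)

/-- The index set of the two-sided `ℤ₊`-ideal `I^c` associated to the two-sided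
`ℤ₊`-ideal with basis indexed by `K`: an index `l` belongs to it iff `b_l` appears
with positive coefficient in some product `b_i * b_j * b_k` with `j ∉ K`. -/
def complIdealIdx {J : Type*} {A : Type*} [NonUnitalRing A] (B : Module.Basis J ℤ A)
    (K : Set J) : Set J :=
  {l : J | ∃ i j k : J, j ∉ K ∧ 0 < B.repr (B i * B j * B k) l}

/-- The `ℤ₊`-pseudoring `(A, B)` is discrete: `I ∩ I^c = 0` for every two-sided
`ℤ₊`-ideal `I`. -/
def IsDiscreteZPseudoring {J : Type*} {A : Type*} [NonUnitalRing A]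
    (B : Module.Basis J ℤ A) : Prop :=
  ∀ K : Set J, SpansTwoSidedIdeal B K →
    Submodule.span ℤ (⇑B '' K) ⊓ Submodule.span ℤ (⇑B '' complIdealIdx B K) = ⊥

/-- A finite `ℤ₊`-nearring `A`, with `ℤ₊`-basis `{b_j}_{j ∈ J}`,
is discrete if and only if the relation `≤_LR` on its basis is symmetric. -/
theorem discrete_iff_leLR_symmetric {J : Type*} [Fintype J] {A : Type*}
    [NonUnitalRing A] (B : Module.Basis J ℤ A)
    (hpos : ∀ i j k : J, 0 ≤ B.repr (B i * B j) k)
    (hnear : ∀ i : J, ∃ j k : J, 0 < B.repr (B j * B i * B k) i) :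
    IsDiscreteZPseudoring B ↔ Symmetric (leLR B) := by
  constructor
  · -- discrete → symmetric
    intro hdisc i j hij
    by_contra hji
    set K : Set J := {l | leLR B l i} with hKdef
    -- basis closure
    have hbasis : ∀ m l, l ∈ K →
        (B m * B l ∈ Submodule.span ℤ (⇑B '' K) ∧
         B l * B m ∈ Submodule.span ℤ (⇑B '' K)) := by
      intro m l hl
      obtain ⟨p, q, hpq⟩ := hl
      constructor
      · rw [Module.Basis.mem_span_image]
        intro t ht
        rw [Finset.mem_coe, Finsupp.mem_support_iff] at ht
        have hpos_ml : 0 < B.repr (B m * B l) t :=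
          lt_of_le_of_ne (hpos m l t) (Ne.symm ht)
        have key : 0 < B.repr (B m * (B p * B i * B q)) t := by
          rw [repr_expand_right]
          exact Finset.sum_pos' (fun u _ => mul_nonneg (hpos3 B hpos p i q u) (hpos m u t))
            ⟨l, Finset.mem_univ l, mul_pos hpq hpos_ml⟩
        have heq : B m * (B p * B i * B q) = (B m * B p) * (B i * B q) := by
          simp [mul_assoc]
        rw [heq, repr_expand_left] at key
        obtain ⟨u, hu⟩ := exists_pos_of_sum_pos key
        have h2 : 0 < B.repr (B u * (B i * B q)) t := by
          rcases mul_pos_iff.mp hu with ⟨_, h⟩ | ⟨h, _⟩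
          · exact h
          · exact absurd h (not_lt.mpr (hpos m p u))
        exact ⟨u, q, by rwa [mul_assoc]⟩
      · rw [Module.Basis.mem_span_image]
        intro t ht
        rw [Finset.mem_coe, Finsupp.mem_support_iff] at ht
        have hpos_lm : 0 < B.repr (B l * B m) t :=
          lt_of_le_of_ne (hpos l m t) (Ne.symm ht)
        have key : 0 < B.repr ((B p * B i * B q) * B m) t := by
          rw [repr_expand_left]
          exact Finset.sum_pos' (fun u _ => mul_nonneg (hpos3 B hpos p i q u) (hpos u m t))
            ⟨l, Finset.mem_univ l, mul_pos hpq hpos_lm⟩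
        have heq : (B p * B i * B q) * B m = (B p * B i) * (B q * B m) := by
          simp [mul_assoc]
        rw [heq, repr_expand_right] at key
        obtain ⟨u, hu⟩ := exists_pos_of_sum_pos key
        have h2 : 0 < B.repr ((B p * B i) * B u) t := by
          rcases mul_pos_iff.mp hu with ⟨_, h⟩ | ⟨h, _⟩
          · exact h
          · exact absurd h (not_lt.mpr (hpos q m u))
        exact ⟨p, u, h2⟩
    have hK : SpansTwoSidedIdeal B K := by
      intro a x hx
      constructor
      · have hle : Submodule.span ℤ (⇑B '' K) ≤
            Submodule.comap (LinearMap.mulLeft ℤ a) (Submodule.span ℤ (⇑B '' K)) := by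
          rw [Submodule.span_le]
          rintro _ ⟨l, hl, rfl⟩
          rw [SetLike.mem_coe, Submodule.mem_comap]
          have expand : a * B l = ∑ m, B.repr a m • (B m * B l) := by
            conv_lhs => rw [← B.sum_repr a]
            rw [Finset.sum_mul]
            exact Finset.sum_congr rfl fun m _ => smul_mul_assoc _ _ _
          show a * B l ∈ _
          rw [expand]
          exact Submodule.sum_mem _ fun m _ => Submodule.smul_mem _ _ (hbasis m l hl).1
        exact hle hx
      · have hle : Submodule.span ℤ (⇑B '' K) ≤
            Submodule.comap (LinearMap.mulRight ℤ a) (Submodule.span ℤ (⇑B '' K)) := by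
          rw [Submodule.span_le]
          rintro _ ⟨l, hl, rfl⟩
          rw [SetLike.mem_coe, Submodule.mem_comap]
          have expand : B l * a = ∑ m, B.repr a m • (B l * B m) := by
            conv_lhs => rw [← B.sum_repr a]
            rw [Finset.mul_sum]
            exact Finset.sum_congr rfl fun m _ => mul_smul_comm _ _ _
          show B l * a ∈ _
          rw [expand]
          exact Submodule.sum_mem _ fun m _ => Submodule.smul_mem _ _ (hbasis m l hl).2
        exact hle hx
    have hbot := hdisc K hK
    have h1 : (B i : A) ∈ Submodule.span ℤ (⇑B '' K) :=
      Submodule.subset_span ⟨i, hnear i, rfl⟩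
    have h2 : (B i : A) ∈ Submodule.span ℤ (⇑B '' complIdealIdx B K) := by
      obtain ⟨k, l, hkl⟩ := hij
      exact Submodule.subset_span ⟨i, ⟨k, j, l, hji, hkl⟩, rfl⟩
    have : (B i : A) ∈ (⊥ : Submodule ℤ A) := hbot ▸ Submodule.mem_inf.mpr ⟨h1, h2⟩
    exact B.ne_zero i ((Submodule.mem_bot ℤ).mp this)
  · -- symmetric → discrete
    intro hsymm K hK
    rw [eq_bot_iff]
    intro x hx
    obtain ⟨hx1, hx2⟩ := Submodule.mem_inf.mp hx
    rw [Module.Basis.mem_span_image] at hx1 hx2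
    have hempty : ∀ t, t ∉ (B.repr x).support := by
      intro t ht
      have htK : t ∈ K := hx1 ht
      obtain ⟨p, j, q, hjK, hp⟩ := hx2 ht
      obtain ⟨k, l, hkl⟩ := hsymm ⟨p, q, hp⟩
      have h1 : (B t : A) ∈ Submodule.span ℤ (⇑B '' K) :=
        Submodule.subset_span ⟨t, htK, rfl⟩
      have h2 := (hK (B k) _ h1).1
      have h3 := (hK (B l) _ h2).2
      rw [Module.Basis.mem_span_image] at h3
      exact hjK (h3 (Finsupp.mem_support_iff.mpr hkl.ne'))
    have : B.repr x = 0 :=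
      Finsupp.support_eq_empty.mp (Finset.eq_empty_iff_forall_notMem.mpr hempty)
    rw [Submodule.mem_bot]
    exact B.repr.map_eq_zero_iff.mp this
end

section
/- A finite ℤ₊-nearring A is discrete if and only if there is a partition of its basis index set J into nonempty subsets J_1, …, J_n such that, for each j, the ℤ-span A_j of {b_i}_{i ∈ J_j} is a two-sided ℤ₊-ideal of A, the ring A decomposes as the (internal) direct sum A = A_1 ⊕ ⋯ ⊕ A_n with A_i · A_j = 0 for i ≠ j, and each A_j, with its induced ℤ₊-basis, is an indecomposable discrete finite ℤ₊-nearring. -/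
namespace ZPAux

open Finset
set_option linter.unusedSectionVars false

variable {J : Type*} [Fintype J] {A : Type*} [NonUnitalRing A] (B : Module.Basis J ℤ A)

lemma expand_left (x y : A) (m : J) :
    B.repr (x * y) m = ∑ p, B.repr x p * B.repr (B p * y) m := by
  conv_lhs => rw [← B.sum_repr x]
  rw [Finset.sum_mul]
  simp [smul_mul_assoc, Finsupp.finset_sum_apply]

lemma expand_right (x y : A) (m : J) :
    B.repr (x * y) m = ∑ q, B.repr y q * B.repr (x * B q) m := by
  conv_lhs => rw [← B.sum_repr y]
  rw [Finset.mul_sum]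
  simp [mul_smul_comm, Finsupp.finset_sum_apply]

lemma expand_middle (x w y : A) (m : J) :
    B.repr (x * w * y) m = ∑ l, B.repr w l * B.repr (x * B l * y) m := by
  conv_lhs => rw [← B.sum_repr w]
  rw [Finset.mul_sum, Finset.sum_mul]
  simp [mul_smul_comm, smul_mul_assoc, Finsupp.finset_sum_apply]

/-- All coordinates of `x` are nonnegative. -/
def Nonneg (x : A) : Prop := ∀ l, 0 ≤ B.repr x l

variable {B}

lemma nonneg_basis (i : J) : Nonneg B (B i) := by
  intro l
  classical
  rw [B.repr_self, Finsupp.single_apply]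
  split <;> simp

lemma exists_pos_of_sum_pos {f g : J → ℤ} (hf : ∀ p, 0 ≤ f p) (hg : ∀ p, 0 ≤ g p)
    (h : 0 < ∑ p, f p * g p) : ∃ p, 0 < f p ∧ 0 < g p := by
  by_contra hc
  push_neg at hc
  have hz : ∀ p ∈ Finset.univ, f p * g p = 0 := by
    intro p _
    rcases (hf p).lt_or_eq with hfp | hfp
    · have h2 : g p = 0 := le_antisymm (hc p hfp) (hg p)
      simp [h2]
    · simp [← hfp]
  rw [Finset.sum_eq_zero hz] at h
  exact lt_irrefl 0 h

lemma sum_pos_of_term_pos {f g : J → ℤ} (hf : ∀ p, 0 ≤ f p) (hg : ∀ p, 0 ≤ g p)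
    (p : J) (h : 0 < f p * g p) : 0 < ∑ q, f q * g q :=
  Finset.sum_pos' (fun q _ => mul_nonneg (hf q) (hg q)) ⟨p, Finset.mem_univ p, h⟩

variable (hpos : ∀ i j k : J, 0 ≤ B.repr (B i * B j) k)
include hpos

lemma nonneg_basis_mul (p : J) {y : A} (hy : Nonneg B y) : Nonneg B (B p * y) := by
  intro m
  rw [expand_right]
  exact Finset.sum_nonneg fun q _ => mul_nonneg (hy q) (hpos p q m)

lemma nonneg_mul {x y : A} (hx : Nonneg B x) (hy : Nonneg B y) : Nonneg B (x * y) := by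
  intro m
  rw [expand_left]
  exact Finset.sum_nonneg fun p _ => mul_nonneg (hx p) (nonneg_basis_mul hpos p hy m)

lemma pos_left_exists {x y : A} (hx : Nonneg B x) (hy : Nonneg B y) {m : J}
    (h : 0 < B.repr (x * y) m) : ∃ p, 0 < B.repr x p ∧ 0 < B.repr (B p * y) m := by
  rw [expand_left] at h
  exact exists_pos_of_sum_pos hx (fun p => nonneg_basis_mul hpos p hy m) h

lemma pos_left_mono {x y : A} (hx : Nonneg B x) (hy : Nonneg B y) {p m : J}
    (hxp : 0 < B.repr x p) (h : 0 < B.repr (B p * y) m) : 0 < B.repr (x * y) m := by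
  rw [expand_left]
  exact sum_pos_of_term_pos hx (fun q => nonneg_basis_mul hpos q hy m) p (mul_pos hxp h)

lemma pos_right_exists {x y : A} (hx : Nonneg B x) (hy : Nonneg B y) {m : J}
    (h : 0 < B.repr (x * y) m) : ∃ q, 0 < B.repr y q ∧ 0 < B.repr (x * B q) m := by
  rw [expand_right] at h
  exact exists_pos_of_sum_pos hy (fun q => nonneg_mul hpos hx (nonneg_basis q) m) h

lemma pos_right_mono {x y : A} (hx : Nonneg B x) (hy : Nonneg B y) {q m : J}
    (hyq : 0 < B.repr y q) (h : 0 < B.repr (x * B q) m) : 0 < B.repr (x * y) m := by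
  rw [expand_right]
  exact sum_pos_of_term_pos hy (fun q' => nonneg_mul hpos hx (nonneg_basis q') m) q
    (mul_pos hyq h)

lemma pos_middle_mono {x w y : A} (hx : Nonneg B x) (hw : Nonneg B w) (hy : Nonneg B y)
    {l m : J} (hwl : 0 < B.repr w l) (h : 0 < B.repr (x * B l * y) m) :
    0 < B.repr (x * w * y) m := by
  rw [expand_middle]
  exact sum_pos_of_term_pos hw
    (fun l' => nonneg_mul hpos (nonneg_mul hpos hx (nonneg_basis l')) hy m) l (mul_pos hwl h)

omit hpos

/-- `l` is reachable from `i`: `b_l` appears in some product `x * b_i * y` with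
`x, y` having nonnegative coordinates. -/
def Reach (B : Module.Basis J ℤ A) (i l : J) : Prop :=
  ∃ x y : A, Nonneg B x ∧ Nonneg B y ∧ 0 < B.repr (x * B i * y) l

lemma reach_of_basis {p i q l : J} (h : 0 < B.repr (B p * B i * B q) l) : Reach B i l :=
  ⟨B p, B q, nonneg_basis p, nonneg_basis q, h⟩

include hpos

lemma reach_basis {i l : J} (h : Reach B i l) :
    ∃ p q, 0 < B.repr (B p * B i * B q) l := by
  obtain ⟨x, y, hx, hy, h⟩ := h
  rw [mul_assoc] at h
  obtain ⟨p, _, h2⟩ := pos_left_exists hpos hx (nonneg_mul hpos (nonneg_basis i) hy) h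
  rw [← mul_assoc] at h2
  obtain ⟨q, _, h3⟩ := pos_right_exists hpos
    (nonneg_mul hpos (nonneg_basis p) (nonneg_basis i)) hy h2
  exact ⟨p, q, h3⟩

lemma reach_trans {i l m : J} (h1 : Reach B i l) (h2 : Reach B l m) : Reach B i m := by
  obtain ⟨x, y, hx, hy, h1⟩ := h1
  obtain ⟨x', y', hx', hy', h2⟩ := h2
  refine ⟨x' * x, y * y', nonneg_mul hpos hx' hx, nonneg_mul hpos hy hy', ?_⟩
  have h3 := pos_middle_mono hpos hx'
    (nonneg_mul hpos (nonneg_mul hpos hx (nonneg_basis i)) hy) hy' h1 h2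
  have heq : x' * (x * B i * y) * y' = x' * x * B i * (y * y') := by noncomm_ring
  rwa [heq] at h3

lemma reach_step_left {i l p m : J} (h1 : Reach B i l) (h2 : 0 < B.repr (B p * B l) m) :
    Reach B i m := by
  obtain ⟨x, y, hx, hy, h1⟩ := h1
  refine ⟨B p * x, y, nonneg_mul hpos (nonneg_basis p) hx, hy, ?_⟩
  have h3 := pos_right_mono hpos (nonneg_basis p)
    (nonneg_mul hpos (nonneg_mul hpos hx (nonneg_basis i)) hy) h1 h2
  rwa [show B p * (x * B i * y) = B p * x * B i * y by noncomm_ring] at h3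

lemma reach_step_right {i l q m : J} (h1 : Reach B i l) (h2 : 0 < B.repr (B l * B q) m) :
    Reach B i m := by
  obtain ⟨x, y, hx, hy, h1⟩ := h1
  refine ⟨x, y * B q, hx, nonneg_mul hpos hy (nonneg_basis q), ?_⟩
  have h3 := pos_left_mono hpos
    (nonneg_mul hpos (nonneg_mul hpos hx (nonneg_basis i)) hy) (nonneg_basis q) h1 h2
  rwa [show x * B i * y * B q = x * B i * (y * B q) by noncomm_ring] at h3

/-- The span of a "reach set" is a two-sided `ℤ₊`-ideal. -/
lemma spans_reach (i0 : J) : SpansTwoSidedIdeal B {m | Reach B i0 m} := by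
  intro a x hx
  rw [Module.Basis.mem_span_image] at hx
  constructor
  · rw [Module.Basis.mem_span_image]
    intro m hm
    rw [Finset.mem_coe, Finsupp.mem_support_iff, expand_left] at hm
    obtain ⟨p, -, hp2⟩ := Finset.exists_ne_zero_of_sum_ne_zero hm
    have hp3 : B.repr (B p * x) m ≠ 0 := fun h => hp2 (by simp [h])
    rw [expand_right] at hp3
    obtain ⟨q, -, hq2⟩ := Finset.exists_ne_zero_of_sum_ne_zero hp3
    have hxq : B.repr x q ≠ 0 := fun h => hq2 (by simp [h])
    have hq3 : B.repr (B p * B q) m ≠ 0 := fun h => hq2 (by simp [h])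
    have hqK : Reach B i0 q := hx (Finsupp.mem_support_iff.2 hxq)
    exact reach_step_left hpos hqK (lt_of_le_of_ne (hpos p q m) (Ne.symm hq3))
  · rw [Module.Basis.mem_span_image]
    intro m hm
    rw [Finset.mem_coe, Finsupp.mem_support_iff, expand_right] at hm
    obtain ⟨q, -, hq2⟩ := Finset.exists_ne_zero_of_sum_ne_zero hm
    have hq3 : B.repr (x * B q) m ≠ 0 := fun h => hq2 (by simp [h])
    rw [expand_left] at hq3
    obtain ⟨p, -, hp2⟩ := Finset.exists_ne_zero_of_sum_ne_zero hq3
    have hxp : B.repr x p ≠ 0 := fun h => hp2 (by simp [h])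
    have hp3 : B.repr (B p * B q) m ≠ 0 := fun h => hp2 (by simp [h])
    have hpK : Reach B i0 p := hx (Finsupp.mem_support_iff.2 hxp)
    exact reach_step_right hpos hpK (lt_of_le_of_ne (hpos p q m) (Ne.symm hp3))

omit hpos

/-- Products across index sets with zero basis products vanish. -/
lemma mul_eq_zero_of_spans {S T : Set J} (hz : ∀ p ∈ S, ∀ q ∈ T, (B p : A) * B q = 0)
    {x y : A} (hx : x ∈ Submodule.span ℤ (⇑B '' S)) (hy : y ∈ Submodule.span ℤ (⇑B '' T)) :
    x * y = 0 := by
  rw [Module.Basis.mem_span_image] at hx hy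
  apply B.ext_elem
  intro m
  rw [map_zero, Finsupp.coe_zero, Pi.zero_apply, expand_left]
  apply Finset.sum_eq_zero
  intro p _
  rcases eq_or_ne (B.repr x p) 0 with h | h
  · rw [h, zero_mul]
  · have hpS : p ∈ S := hx (Finsupp.mem_support_iff.2 h)
    have h0 : B.repr (B p * y) m = 0 := by
      rw [expand_right]
      apply Finset.sum_eq_zero
      intro q _
      rcases eq_or_ne (B.repr y q) 0 with h' | h'
      · rw [h', zero_mul]
      · have hqT : q ∈ T := hy (Finsupp.mem_support_iff.2 h')
        rw [hz p hpS q hqT]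
        simp
    rw [h0, mul_zero]

variable (hnear : ∀ i : J, ∃ j k : J, 0 < B.repr (B j * B i * B k) i)
include hnear

lemma reach_refl (i : J) : Reach B i i := by
  obtain ⟨j, k, h⟩ := hnear i
  exact ⟨B j, B k, nonneg_basis j, nonneg_basis k, h⟩

include hpos

lemma reach_symm (hdisc : IsDiscreteZPseudoring B) {i l : J} (h : Reach B i l) :
    Reach B l i := by
  by_contra hin
  have hK := spans_reach hpos l
  have hl1 : (B l : A) ∈ Submodule.span ℤ (⇑B '' {m | Reach B l m}) :=
    Submodule.subset_span ⟨l, reach_refl hnear l, rfl⟩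
  have hl2 : (B l : A) ∈ Submodule.span ℤ (⇑B '' complIdealIdx B {m | Reach B l m}) := by
    apply Submodule.subset_span
    refine ⟨l, ?_, rfl⟩
    obtain ⟨p, q, hpq⟩ := reach_basis hpos h
    exact ⟨p, i, q, hin, hpq⟩
  have hb : (B l : A) = 0 := by
    have hm := Submodule.mem_inf.2 ⟨hl1, hl2⟩
    rw [hdisc _ hK, Submodule.mem_bot] at hm
    exact hm
  exact B.ne_zero l hb

/-- If `b_i * b_j ≠ 0` then some `k` is reachable from both `i` and `j`. -/
lemma reach_of_basis_mul_ne {i j : J} (h : (B i : A) * B j ≠ 0) :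
    ∃ k, Reach B i k ∧ Reach B j k := by
  have hex : ∃ k, B.repr ((B i : A) * B j) k ≠ 0 := by
    by_contra hall
    push_neg at hall
    exact h (B.ext_elem fun k => by simp [hall k])
  obtain ⟨k, hk⟩ := hex
  have hk' : 0 < B.repr ((B i : A) * B j) k := lt_of_le_of_ne (hpos i j k) (Ne.symm hk)
  refine ⟨k, ?_, ?_⟩
  · -- Reach i k
    obtain ⟨u, v, hu⟩ := hnear i
    have h3 := pos_left_mono hpos
      (nonneg_mul hpos (nonneg_mul hpos (nonneg_basis u) (nonneg_basis i)) (nonneg_basis v))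
      (nonneg_basis j) hu hk'
    refine ⟨B u, B v * B j, nonneg_basis u, nonneg_mul hpos (nonneg_basis v) (nonneg_basis j), ?_⟩
    rwa [show (B u : A) * B i * (B v * B j) = B u * B i * B v * B j by noncomm_ring]
  · -- Reach j k
    obtain ⟨u, v, hu⟩ := hnear j
    have h3 := pos_right_mono hpos (nonneg_basis i)
      (nonneg_mul hpos (nonneg_mul hpos (nonneg_basis u) (nonneg_basis j)) (nonneg_basis v))
      hu hk'
    refine ⟨B i * B u, B v, nonneg_mul hpos (nonneg_basis i) (nonneg_basis u), nonneg_basis v, ?_⟩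
    rwa [show (B i : A) * B u * B j * B v = B i * (B u * B j * B v) by noncomm_ring]

/-- From the near-ring witness `0 < (b_j b_i b_k)_i`, both `j` and `k` reach `i`. -/
lemma near_block {i j k : J} (h : 0 < B.repr ((B j : A) * B i * B k) i) :
    Reach B j i ∧ Reach B k i := by
  constructor
  · obtain ⟨u, v, hu⟩ := hnear j
    have h' : 0 < B.repr ((B j : A) * (B i * B k)) i := by rwa [← mul_assoc]
    have h3 := pos_left_mono hpos
      (nonneg_mul hpos (nonneg_mul hpos (nonneg_basis u) (nonneg_basis j)) (nonneg_basis v))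
      (nonneg_mul hpos (nonneg_basis i) (nonneg_basis k)) hu h'
    refine ⟨B u, B v * (B i * B k), nonneg_basis u,
      nonneg_mul hpos (nonneg_basis v) (nonneg_mul hpos (nonneg_basis i) (nonneg_basis k)), ?_⟩
    rwa [show (B u : A) * B j * (B v * (B i * B k)) = B u * B j * B v * (B i * B k)
      by noncomm_ring]
  · obtain ⟨u, v, hu⟩ := hnear k
    have h3 := pos_right_mono hpos (nonneg_mul hpos (nonneg_basis j) (nonneg_basis i))
      (nonneg_mul hpos (nonneg_mul hpos (nonneg_basis u) (nonneg_basis k)) (nonneg_basis v))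
      hu h
    refine ⟨B j * B i * B u, B v,
      nonneg_mul hpos (nonneg_mul hpos (nonneg_basis j) (nonneg_basis i)) (nonneg_basis u),
      nonneg_basis v, ?_⟩
    rwa [show (B j : A) * B i * B u * B k * B v = B j * B i * (B u * B k * B v)
      by noncomm_ring]

end ZPAux


open ZPAux

/-- A finite `ℤ₊`-nearring `A`, with `ℤ₊`-basis `{b_j}_{j ∈ J}`, is
discrete if and only if there is a partition of `J` into nonempty subsets
`J_1, …, J_n` such that, for each `m`, the `ℤ`-span `A_m` of the basis elements
indexed by `J_m` is a two-sided `ℤ₊`-ideal of `A`, the ring `A` decomposes as the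
internal direct sum `A = A_1 ⊕ ⋯ ⊕ A_n` with `A_m · A_{m'} = 0` for `m ≠ m'`, and
each `A_m` with its induced `ℤ₊`-basis is an indecomposable discrete finite
`ℤ₊`-nearring (i.e. it is again a `ℤ₊`-nearring and has no nontrivial two-sided
`ℤ₊`-ideal). -/
theorem discrete_iff_prod_indecomposable {J : Type*} [Fintype J] {A : Type*}
    [NonUnitalRing A] (B : Module.Basis J ℤ A)
    (hpos : ∀ i j k : J, 0 ≤ B.repr (B i * B j) k)
    (hnear : ∀ i : J, ∃ j k : J, 0 < B.repr (B j * B i * B k) i) :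
    IsDiscreteZPseudoring B ↔
      ∃ (n : ℕ) (Jb : Fin n → Set J),
        -- a partition of `J` into nonempty subsets
        (∀ m, (Jb m).Nonempty) ∧
        (Pairwise fun m m' => Disjoint (Jb m) (Jb m')) ∧
        (⋃ m, Jb m) = Set.univ ∧
        -- each `ℤ`-span `A_m` is a two-sided `ℤ₊`-ideal of `A`
        (∀ m, SpansTwoSidedIdeal B (Jb m)) ∧
        -- `A` is the (internal) direct sum of the `A_m` …
        (⨆ m, Submodule.span ℤ (⇑B '' Jb m)) = ⊤ ∧
        -- … with `A_m · A_{m'} = 0` for `m ≠ m'`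
        (∀ m m', m ≠ m' →
          ∀ x ∈ Submodule.span ℤ (⇑B '' Jb m), ∀ y ∈ Submodule.span ℤ (⇑B '' Jb m'),
            x * y = 0) ∧
        -- each `A_m`, with its induced `ℤ₊`-basis, is a `ℤ₊`-nearring …
        (∀ m, ∀ i ∈ Jb m, ∃ j ∈ Jb m, ∃ k ∈ Jb m, 0 < B.repr (B j * B i * B k) i) ∧
        -- … which is indecomposable discrete: no nontrivial two-sided `ℤ₊`-ideal
        (∀ m, ∀ K : Set J, K ⊆ Jb m →
          (∀ a ∈ Submodule.span ℤ (⇑B '' Jb m), ∀ x ∈ Submodule.span ℤ (⇑B '' K),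
            a * x ∈ Submodule.span ℤ (⇑B '' K) ∧ x * a ∈ Submodule.span ℤ (⇑B '' K)) →
          K = ∅ ∨ K = Jb m) := by
  classical
  constructor
  · -- forward: discrete ⇒ decomposition
    intro hdisc
    set s : Setoid J := ⟨Reach B, ⟨fun i => reach_refl hnear i,
      fun h => reach_symm hpos hnear hdisc h, fun h1 h2 => reach_trans hpos h1 h2⟩⟩ with hs
    have : Fintype (Quotient s) := Fintype.ofFinite _
    obtain ⟨e⟩ : Nonempty (Fin (Fintype.card (Quotient s)) ≃ Quotient s) :=
      ⟨(Fintype.equivFin _).symm⟩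
    set Jb : Fin (Fintype.card (Quotient s)) → Set J :=
      fun m => {j | Quotient.mk s j = e m} with hJb
    have hmem : ∀ j : J, j ∈ Jb (e.symm (Quotient.mk s j)) := fun j =>
      (e.apply_symm_apply (Quotient.mk s j)).symm
    have hcls : ∀ (m) (j0), j0 ∈ Jb m → Jb m = {l | Reach B j0 l} := by
      intro m j0 h0
      have h0' : Quotient.mk s j0 = e m := h0
      ext l
      constructor
      · intro h
        have hl : Quotient.mk s l = Quotient.mk s j0 :=
          (h : Quotient.mk s l = e m).trans h0'.symm
        exact reach_symm hpos hnear hdisc (Quotient.eq.1 hl)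
      · intro h
        exact ((Quotient.sound (reach_symm hpos hnear hdisc h)).trans h0' :
          Quotient.mk s l = e m)
    have hcross : ∀ m m', m ≠ m' → ∀ i ∈ Jb m, ∀ j ∈ Jb m', (B i : A) * B j = 0 := by
      intro m m' hne i hi j hj
      by_contra h
      obtain ⟨k, hik, hjk⟩ := reach_of_basis_mul_ne hpos hnear h
      have heq : Quotient.mk s i = Quotient.mk s j :=
        (Quotient.sound hik).trans (Quotient.sound hjk).symm
      have hi' : Quotient.mk s i = e m := hi
      have hj' : Quotient.mk s j = e m' := hj
      exact hne (e.injective ((hi'.symm.trans heq).trans hj'))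
    refine ⟨_, Jb, ?_, ?_, ?_, ?_, ?_, ?_, ?_, ?_⟩
    · -- nonempty
      intro m
      obtain ⟨j, hj⟩ := (e m).exists_rep
      exact ⟨j, hj⟩
    · -- pairwise disjoint
      intro m m' hne
      rw [Set.disjoint_left]
      intro j hj hj'
      have hj1 : Quotient.mk s j = e m := hj
      have hj2 : Quotient.mk s j = e m' := hj'
      exact hne (e.injective (hj1.symm.trans hj2))
    · -- union is univ
      apply Set.eq_univ_of_forall
      intro j
      exact Set.mem_iUnion.2 ⟨e.symm (Quotient.mk s j), hmem j⟩
    · -- each block spans a two-sided ideal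
      intro m
      obtain ⟨j0, hj0⟩ := (e m).exists_rep
      rw [hcls m j0 hj0]
      exact spans_reach hpos j0
    · -- supremum is top
      rw [eq_top_iff, ← B.span_eq]
      refine Submodule.span_le.2 ?_
      rintro _ ⟨j, rfl⟩
      exact SetLike.mem_coe.2 (Submodule.mem_iSup_of_mem (e.symm (Quotient.mk s j))
        (Submodule.subset_span ⟨j, hmem j, rfl⟩))
    · -- cross products vanish
      intro m m' hne x hx y hy
      exact mul_eq_zero_of_spans (hcross m m' hne) hx hy
    · -- near-ring condition in each block
      intro m i hi
      obtain ⟨j, k, h⟩ := hnear i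
      obtain ⟨hji, hki⟩ := near_block hpos hnear h
      have hi' : Quotient.mk s i = e m := hi
      exact ⟨j, ((Quotient.sound hji).trans hi' : Quotient.mk s j = e m), k,
        ((Quotient.sound hki).trans hi' : Quotient.mk s k = e m), h⟩
    · -- indecomposability of each block
      intro m K hKsub hK
      rcases Set.eq_empty_or_nonempty K with hE | ⟨j, hjK⟩
      · exact Or.inl hE
      right
      have hjm : j ∈ Jb m := hKsub hjK
      refine Set.Subset.antisymm hKsub ?_
      intro l hlm
      -- Reach j l
      have hjm' : Quotient.mk s j = e m := hjm
      have hlm' : Quotient.mk s l = e m := hlm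
      have hrel : Reach B j l := Quotient.eq.1 (hjm'.trans hlm'.symm)
      obtain ⟨p, q, hpq⟩ := reach_basis hpos hrel
      have hBpBj : (B p : A) * B j ≠ 0 := by
        intro h0
        rw [h0, zero_mul] at hpq
        simp at hpq
      have hpm : p ∈ Jb m := by
        by_contra hpn
        have hne : e.symm (Quotient.mk s p) ≠ m := by
          intro hh
          exact hpn (hh ▸ hmem p)
        exact hBpBj (hcross _ m hne p (hmem p) j hjm)
      have h1 : (B p : A) * B j ∈ Submodule.span ℤ (⇑B '' K) :=
        (hK (B p) (Submodule.subset_span ⟨p, hpm, rfl⟩) (B j)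
          (Submodule.subset_span ⟨j, hjK, rfl⟩)).1
      have hqm : q ∈ Jb m := by
        by_contra hqn
        have hne : m ≠ e.symm (Quotient.mk s q) := by
          intro hh
          exact hqn (hh ▸ hmem q)
        have hz : (B p : A) * B j * B q = 0 :=
          mul_eq_zero_of_spans (hcross m _ hne)
            (Submodule.span_mono (Set.image_mono hKsub) h1)
            (Submodule.subset_span ⟨q, hmem q, rfl⟩)
        rw [hz] at hpq
        simp at hpq
      have h2 : (B p : A) * B j * B q ∈ Submodule.span ℤ (⇑B '' K) :=
        (hK (B q) (Submodule.subset_span ⟨q, hqm, rfl⟩) _ h1).2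
      exact B.mem_span_image.1 h2 (Finsupp.mem_support_iff.2 hpq.ne')
  · -- reverse: decomposition ⇒ discrete
    rintro ⟨n, Jb, -, -, huniv, hideal, -, -, -, hind⟩ K hK
    rw [eq_bot_iff]
    intro x hx
    obtain ⟨h1, h2⟩ := Submodule.mem_inf.1 hx
    rw [Module.Basis.mem_span_image] at h1 h2
    rw [Submodule.mem_bot]
    have hempty : ∀ l ∈ K, l ∉ complIdealIdx B K := by
      intro l hlK hlC
      obtain ⟨i, j, k, hjK, hp⟩ := hlC
      have hj : j ∈ ⋃ m, Jb m := huniv ▸ Set.mem_univ j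
      obtain ⟨m, hjm⟩ := Set.mem_iUnion.1 hj
      have hK'sub : K ∩ Jb m ⊆ Jb m := Set.inter_subset_right
      have hK'ideal : ∀ a ∈ Submodule.span ℤ (⇑B '' Jb m),
          ∀ x' ∈ Submodule.span ℤ (⇑B '' (K ∩ Jb m)),
          a * x' ∈ Submodule.span ℤ (⇑B '' (K ∩ Jb m)) ∧
          x' * a ∈ Submodule.span ℤ (⇑B '' (K ∩ Jb m)) := by
        intro a ha x' hx'
        have hx'K : x' ∈ Submodule.span ℤ (⇑B '' K) :=
          Submodule.span_mono (Set.image_mono Set.inter_subset_left) hx'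
        have hx'm : x' ∈ Submodule.span ℤ (⇑B '' Jb m) :=
          Submodule.span_mono (Set.image_mono hK'sub) hx'
        constructor
        · exact B.mem_span_image.2 (Set.subset_inter
            (B.mem_span_image.1 (hK a x' hx'K).1)
            (B.mem_span_image.1 (hideal m a x' hx'm).1))
        · exact B.mem_span_image.2 (Set.subset_inter
            (B.mem_span_image.1 (hK a x' hx'K).2)
            (B.mem_span_image.1 (hideal m a x' hx'm).2))
      rcases hind m (K ∩ Jb m) hK'sub hK'ideal with hE | hF
      · -- K ∩ Jb m = ∅, but l lies in it
        have t1 : (B j : A) ∈ Submodule.span ℤ (⇑B '' Jb m) :=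
          Submodule.subset_span ⟨j, hjm, rfl⟩
        have t2 := (hideal m (B i) (B j) t1).1
        have t3 := (hideal m (B k) _ t2).2
        have hlm : l ∈ Jb m := B.mem_span_image.1 t3 (Finsupp.mem_support_iff.2 hp.ne')
        have : l ∈ K ∩ Jb m := ⟨hlK, hlm⟩
        rw [hE] at this
        exact this
      · -- K ∩ Jb m = Jb m, but j ∈ Jb m and j ∉ K
        have hj2 : j ∈ K ∩ Jb m := by rw [hF]; exact hjm
        exact hjK hj2.1
    apply B.ext_elem
    intro l
    simp only [map_zero, Finsupp.coe_zero, Pi.zero_apply]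
    by_contra hl
    have hls : l ∈ (B.repr x).support := Finsupp.mem_support_iff.2 hl
    exact hempty l (h1 hls) (h2 hls)
end
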